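/- Every countable subset S ⊆ ℕ^ℕ is overguessable. -/

import Mathlib

open Filter Set
open scoped Classical

/-- The initial segment `(f 0, ..., f n)` of an infinite sequence. -/
def seg (f : ℕ → ℕ) (n : ℕ) : List ℕ := List.ofFn fun i : Fin (n + 1) => f i

/-- `G` guesses `S`: for every `f` eventually `G (f 0, ..., f n)` is 1 if `f ∈ S`, else 0. -/
def Guesses (G : List ℕ → Fin 2) (S : Set (ℕ → ℕ)) : Prop :=
  ∀ f : ℕ → ℕ, ∃ m, ∀ n, n > m → G (seg f n) = if f ∈ S then 1 else 0

/-- `S` is guessable if some `G` guesses it. -/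
def Guessable (S : Set (ℕ → ℕ)) : Prop := ∃ G, Guesses G S

/-- An infinite sequence extends a finite sequence. -/
def ExtendsSeq (h : ℕ → ℕ) (g : List ℕ) : Prop :=
  ∀ i, (hi : i < g.length) → h i = g.get ⟨i, hi⟩

/-- `S` is overguessable. -/
def Overguessable (S : Set (ℕ → ℕ)) : Prop :=
  ∃ μ : List ℕ → ℕ∞,
    (∀ f ∈ S, ∃ B : ℕ, ∀ᶠ n in atTop, μ (seg f n) ≤ (B : ℕ∞)) ∧
    (∀ f ∉ S, ∀ B : ℕ, ∀ᶠ n in atTop, (B : ℕ∞) < μ (seg f n))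

theorem stmt8 (S : Set (ℕ → ℕ)) (h : S.Countable) : Overguessable S := by
  rcases S.eq_empty_or_nonempty with hS | hS
  · refine ⟨fun _ => ⊤, ?_, ?_⟩
    · intro f hf; simp [hS] at hf
    · intro f _ B
      filter_upwards with n
      exact lt_of_lt_of_le (by simp) le_rfl |>.trans_le le_rfl |>.trans_le le_rfl
  · obtain ⟨e, he⟩ := h.exists_surjective hS
    refine ⟨fun s => ⨅ k ∈ {k : ℕ | seg (e k) (s.length - 1) = s}, (k : ℕ∞), ?_, ?_⟩
    · intro f hf
      obtain ⟨k, hk⟩ := he ⟨f, hf⟩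
      refine ⟨k, ?_⟩
      filter_upwards with n
      have hmem : seg ((e k : ℕ → ℕ)) ((seg f n).length - 1) = seg f n := by
        have : (e k : ℕ → ℕ) = f := by rw [hk]
        rw [this]; congr 1; simp [seg, List.length_ofFn]
      exact biInf_le _ hmem
    · intro f hf B
      have hne : ∀ k, k ≤ B → ∃ i, (e k : ℕ → ℕ) i ≠ f i := by
        intro k _
        by_contra hc
        push_neg at hc
        exact hf ((funext hc : (e k : ℕ → ℕ) = f) ▸ (e k).2)
      choose idx hidx using hne
      set N := Finset.sup (Finset.range (B + 1)) (fun k => if hk : k ≤ B then idx k hk else 0)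
      filter_upwards [eventually_ge_atTop N] with n hn
      have key : ∀ k ∈ {k : ℕ | seg (e k) ((seg f n).length - 1) = seg f n},
          (B : ℕ∞) + 1 ≤ (k : ℕ∞) := by
        intro k hk
        simp only [Set.mem_setOf_eq, seg, List.length_ofFn] at hk
        have hk' : ∀ i : Fin (n + 1), (e k : ℕ → ℕ) i = f i := by
          have := List.ofFn_inj.mp hk
          intro i; exact congrFun this i
        by_contra hlt
        push_neg at hlt
        have hkB : k ≤ B := by
          have : (k : ℕ∞) < (B : ℕ∞) + 1 := hlt
          exact_mod_cast Nat.lt_succ_iff.mp (by exact_mod_cast this)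
        have hiN : idx k hkB ≤ N := by
          have : k ∈ Finset.range (B + 1) := Finset.mem_range.mpr (Nat.lt_succ_of_le hkB)
          have := Finset.le_sup (f := fun k => if hk : k ≤ B then idx k hk else 0) this
          simpa [hkB] using this
        have : idx k hkB < n + 1 := Nat.lt_succ_of_le (hiN.trans hn)
        exact hidx k hkB (hk' ⟨idx k hkB, this⟩)
      have : (B : ℕ∞) + 1 ≤ ⨅ k ∈ {k : ℕ | seg (e k) ((seg f n).length - 1) = seg f n}, (k : ℕ∞) :=
        le_iInf₂ key
      calc (B : ℕ∞) < (B : ℕ∞) + 1 := by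
            exact_mod_cast Nat.lt_succ_self B
        _ ≤ _ := this
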